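/- (Residual-matrix identity for the PCA step.) Suppose X = α1_n^T + B F_o^T + B_c(W + 1_nμ^T)^T + E, let F̃_o = Q(1_n)F_o with F̃_o^TF̃_o invertible, and let B̂^T = (F̃_o^TF̃_o)^{−1}F̃_o^TX^T. Then the demeaned adjusted return matrix R := (X − B̂F_o^T)Q(1_n) satisfies R = XQ(F̃_o)Q(1_n) = (B_cW^T + E)Q(F̃_o)Q(1_n); in particular R contains neither the intercept α nor the observed-factor component BF_o^T nor the constant term B_cμ1_n^T. -/
import Mathlib


/-!
Residual-matrix identity for the PCA step:
with `X = α1ᵀ + B F_oᵀ + B_c(W + 1μᵀ)ᵀ + E`, `F̃_o = Q(1_n)F_o` (with `F̃_oᵀF̃_o`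
invertible) and `B̂ᵀ = (F̃_oᵀF̃_o)⁻¹F̃_oᵀXᵀ`, the demeaned adjusted return matrix
`R := (X − B̂F_oᵀ)Q(1_n)` satisfies
`R = XQ(F̃_o)Q(1_n) = (B_cWᵀ + E)Q(F̃_o)Q(1_n)`;
in particular `R` contains neither the intercept `α` nor the observed-factor component
`BF_oᵀ` nor the constant term `B_cμ1ᵀ`.
-/

open Matrix

noncomputable section

/-- The projection operator `H(A) = A(AᵀA)⁻¹Aᵀ`. -/
def Hproj {n k : ℕ} (A : Matrix (Fin n) (Fin k) ℝ) : Matrix (Fin n) (Fin n) ℝ :=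
  A * (Aᵀ * A)⁻¹ * Aᵀ

/-- The complement `Q(A) = I − H(A)` of the projection operator. -/
def Qproj {n k : ℕ} (A : Matrix (Fin n) (Fin k) ℝ) : Matrix (Fin n) (Fin n) ℝ :=
  1 - Hproj A

lemma Hproj_transpose {n k : ℕ} (A : Matrix (Fin n) (Fin k) ℝ) :
    (Hproj A)ᵀ = Hproj A := by
  unfold Hproj
  rw [transpose_mul, transpose_mul, transpose_transpose, Matrix.transpose_nonsing_inv,
    transpose_mul, transpose_transpose, Matrix.mul_assoc]

lemma Qproj_transpose {n k : ℕ} (A : Matrix (Fin n) (Fin k) ℝ) :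
    (Qproj A)ᵀ = Qproj A := by
  unfold Qproj
  rw [transpose_sub, transpose_one, Hproj_transpose]

lemma Hproj_mul {n k : ℕ} (A : Matrix (Fin n) (Fin k) ℝ) (h : IsUnit (Aᵀ * A)) :
    Hproj A * A = A := by
  have hd : IsUnit (Aᵀ * A).det := (Matrix.isUnit_iff_isUnit_det _).mp h
  unfold Hproj
  rw [Matrix.mul_assoc A (Aᵀ * A)⁻¹ Aᵀ, Matrix.mul_assoc A ((Aᵀ * A)⁻¹ * Aᵀ) A,
    Matrix.mul_assoc (Aᵀ * A)⁻¹ Aᵀ A, Matrix.nonsing_inv_mul _ hd, Matrix.mul_one]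

lemma Qproj_mul {n k : ℕ} (A : Matrix (Fin n) (Fin k) ℝ) (h : IsUnit (Aᵀ * A)) :
    Qproj A * A = 0 := by
  unfold Qproj
  rw [Matrix.sub_mul, Matrix.one_mul, Hproj_mul A h, sub_self]

lemma Hproj_idem {n k : ℕ} (A : Matrix (Fin n) (Fin k) ℝ) (h : IsUnit (Aᵀ * A)) :
    Hproj A * Hproj A = Hproj A := by
  calc Hproj A * Hproj A = (Hproj A * A) * ((Aᵀ * A)⁻¹ * Aᵀ) := by
        simp only [Hproj, Matrix.mul_assoc]
    _ = Hproj A := by rw [Hproj_mul A h, Hproj, Matrix.mul_assoc]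

lemma Qproj_idem {n k : ℕ} (A : Matrix (Fin n) (Fin k) ℝ) (h : IsUnit (Aᵀ * A)) :
    Qproj A * Qproj A = Qproj A := by
  unfold Qproj
  rw [Matrix.sub_mul, Matrix.one_mul, Matrix.mul_sub, Matrix.mul_one, Hproj_idem A h]
  abel

theorem residual_matrix_identity {p n r_o r_c : ℕ} (hn : 0 < n)
    (α : Fin p → ℝ) (μ : Fin r_c → ℝ)
    (B : Matrix (Fin p) (Fin r_o) ℝ) (Bc : Matrix (Fin p) (Fin r_c) ℝ)
    (Fo : Matrix (Fin n) (Fin r_o) ℝ) (W : Matrix (Fin n) (Fin r_c) ℝ)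
    (E : Matrix (Fin p) (Fin n) ℝ)
    (onesMat : Matrix (Fin n) (Fin 1) ℝ) (hones : onesMat = Matrix.of fun _ _ => (1 : ℝ))
    (X : Matrix (Fin p) (Fin n) ℝ)
    (hX : X = vecMulVec α (fun _ => (1 : ℝ)) + B * Foᵀ
        + Bc * (W + vecMulVec (fun _ => (1 : ℝ)) μ)ᵀ + E)
    (Ftil : Matrix (Fin n) (Fin r_o) ℝ) (hFtil : Ftil = Qproj onesMat * Fo)
    (hinv : IsUnit (Ftilᵀ * Ftil))
    (Bhat : Matrix (Fin p) (Fin r_o) ℝ)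
    (hBhat : Bhatᵀ = (Ftilᵀ * Ftil)⁻¹ * Ftilᵀ * Xᵀ)
    (R : Matrix (Fin p) (Fin n) ℝ)
    (hR : R = (X - Bhat * Foᵀ) * Qproj onesMat) :
    R = X * Qproj Ftil * Qproj onesMat ∧
    R = (Bc * Wᵀ + E) * Qproj Ftil * Qproj onesMat := by
  -- the 1×1 Gram matrix of `onesMat` is `n • 1`, which is invertible
  have hgram : onesMatᵀ * onesMat = (n : ℝ) • (1 : Matrix (Fin 1) (Fin 1) ℝ) := by
    subst hones
    ext i j
    simp [Matrix.mul_apply, Matrix.one_apply, Subsingleton.elim i j]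
  have hU1 : IsUnit (onesMatᵀ * onesMat) := by
    rw [Matrix.isUnit_iff_isUnit_det, hgram]
    simp [Matrix.det_smul, isUnit_iff_ne_zero, hn.ne']
  set Q1 := Qproj onesMat with hQ1def
  have hdet : IsUnit (Ftilᵀ * Ftil).det := (Matrix.isUnit_iff_isUnit_det _).mp hinv
  -- basic identities
  have hQ1F : Q1 * Ftil = Ftil := by
    rw [hFtil, ← Matrix.mul_assoc, Qproj_idem _ hU1]
  have hFtT : Ftilᵀ * Q1 = Ftilᵀ := by
    have := congrArg Matrix.transpose hQ1F
    simpa [hQ1def, Matrix.transpose_mul, Qproj_transpose] using this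
  have hFoQ1 : Foᵀ * Q1 = Ftilᵀ := by
    rw [hFtil, Matrix.transpose_mul, Qproj_transpose]
  have honesQ1 : onesMatᵀ * Q1 = 0 := by
    have := congrArg Matrix.transpose (Qproj_mul onesMat hU1)
    simpa [hQ1def, Matrix.transpose_mul, Qproj_transpose] using this
  have hDsymm : ((Ftilᵀ * Ftil)⁻¹)ᵀ = (Ftilᵀ * Ftil)⁻¹ := by
    rw [Matrix.transpose_nonsing_inv, Matrix.transpose_mul, transpose_transpose]
  have hBhat' : Bhat = X * Ftil * (Ftilᵀ * Ftil)⁻¹ := by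
    have := congrArg Matrix.transpose hBhat
    simpa [Matrix.transpose_mul, hDsymm, Matrix.mul_assoc] using this
  -- first identity
  have h1 : R = X * Q1 - X * Ftil * (Ftilᵀ * Ftil)⁻¹ * Ftilᵀ := by
    rw [hR, Matrix.sub_mul, hBhat', Matrix.mul_assoc (X * Ftil * (Ftilᵀ * Ftil)⁻¹),
      hFoQ1]
  have h2 : X * Qproj Ftil * Q1 = X * Q1 - X * Ftil * (Ftilᵀ * Ftil)⁻¹ * Ftilᵀ := by
    rw [Qproj, Hproj, Matrix.mul_sub, Matrix.mul_one, Matrix.sub_mul,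
      Matrix.mul_assoc X (Ftil * (Ftilᵀ * Ftil)⁻¹ * Ftilᵀ) Q1]
    rw [Matrix.mul_assoc (Ftil * (Ftilᵀ * Ftil)⁻¹) Ftilᵀ Q1, hFtT]
    rw [← Matrix.mul_assoc X (Ftil * (Ftilᵀ * Ftil)⁻¹) Ftilᵀ, ← Matrix.mul_assoc X Ftil _]
  have hfirst : R = X * Qproj Ftil * Q1 := by rw [h1, h2]
  refine ⟨hfirst, ?_⟩
  -- second identity: the removed components are killed by `Qproj Ftil * Q1`
  set M := Qproj Ftil * Q1 with hMdef
  have hFoM : Foᵀ * M = 0 := by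
    have hFoFt : Foᵀ * Ftil = Ftilᵀ * Ftil := by
      have h := congrArg Matrix.transpose (by
        calc Ftilᵀ * Fo = Ftilᵀ * Q1 * Fo := by rw [hFtT]
          _ = Ftilᵀ * Ftil := by rw [Matrix.mul_assoc, ← hFtil])
      simpa [Matrix.transpose_mul, Matrix.transpose_mul, transpose_transpose] using h
    have : Foᵀ * Hproj Ftil = Ftilᵀ := by
      rw [Hproj, ← Matrix.mul_assoc, ← Matrix.mul_assoc, hFoFt,
        Matrix.mul_nonsing_inv _ hdet, Matrix.one_mul]
    rw [hMdef, ← Matrix.mul_assoc, Qproj, Matrix.mul_sub, Matrix.mul_one, this,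
      Matrix.sub_mul, hFoQ1, hFtT, sub_self]
  have honesM : onesMatᵀ * M = 0 := by
    have honesFt : onesMatᵀ * Ftil = 0 := by
      rw [hFtil, ← Matrix.mul_assoc, honesQ1, Matrix.zero_mul]
    have : onesMatᵀ * Hproj Ftil = 0 := by
      rw [Hproj, ← Matrix.mul_assoc, ← Matrix.mul_assoc, honesFt, Matrix.zero_mul,
        Matrix.zero_mul]
    rw [hMdef, ← Matrix.mul_assoc, Qproj, Matrix.mul_sub, Matrix.mul_one, this, sub_zero,
      honesQ1]
  -- rewrite the `vecMulVec` terms through `onesMat`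
  have hrow : Matrix.replicateRow (Fin 1) (fun _ => (1 : ℝ)) = onesMatᵀ := by
    subst hones; ext i j; simp [Matrix.replicateRow]
  have hvec1 : ∀ v : Fin p → ℝ,
      Matrix.vecMulVec v (fun _ : Fin n => (1 : ℝ)) * M = 0 := by
    intro v
    rw [Matrix.vecMulVec_eq (Fin 1), hrow, Matrix.mul_assoc, honesM, Matrix.mul_zero]
  have hvecT : (Matrix.vecMulVec (fun _ : Fin n => (1 : ℝ)) μ)ᵀ
      = Matrix.vecMulVec μ (fun _ : Fin n => (1 : ℝ)) := by
    ext i j; simp [Matrix.vecMulVec, mul_comm]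
  -- assemble
  have hvecmu : Matrix.vecMulVec μ (fun _ : Fin n => (1 : ℝ)) * M = 0 := by
    rw [Matrix.vecMulVec_eq (Fin 1), hrow, Matrix.mul_assoc, honesM, Matrix.mul_zero]
  have hD : X - (Bc * Wᵀ + E)
      = Matrix.vecMulVec α (fun _ => (1 : ℝ)) + B * Foᵀ
        + Bc * Matrix.vecMulVec μ (fun _ : Fin n => (1 : ℝ)) := by
    rw [hX, Matrix.transpose_add, hvecT, Matrix.mul_add]
    abel
  have hDM : (X - (Bc * Wᵀ + E)) * M = 0 := by
    rw [hD, Matrix.add_mul, Matrix.add_mul, hvec1 α, Matrix.mul_assoc, hFoM,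
      Matrix.mul_zero, Matrix.mul_assoc, hvecmu, Matrix.mul_zero]
    simp
  have hXM : X * M = (Bc * Wᵀ + E) * M := by
    rw [Matrix.sub_mul] at hDM
    exact sub_eq_zero.mp hDM
  rw [hfirst, Matrix.mul_assoc, Matrix.mul_assoc, ← hMdef, hXM]
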